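/- Let Λ be a finite dimensional algebra and T a tilting module (pd T ≤ 1, Ext¹(T,T) = 0, and there is an exact sequence 0 → Λ → T₀ → T₁ → 0 with T₀, T₁ ∈ add T). Then Fac T, the class of factor modules of modules in add T, is closed under extensions: if 0 → X → Y → Z → 0 is exact with X, Z ∈ Fac T, then Y ∈ Fac T. -/

import Mathlib

open CategoryTheory

/-- `Ext¹` of modules, as an abelian group (`ℤ`-module). -/
noncomputable def ext1 (Λ : Type) [Ring Λ] (M N : ModuleCat Λ) : ModuleCat ℤ :=
  ((Ext ℤ (ModuleCat Λ) 1).obj (Opposite.op M)).obj N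

/-- `X ∈ add T`: `X` is a direct summand of a finite direct sum of copies of `T`. -/
def memAdd (Λ : Type) [Ring Λ] (T X : ModuleCat Λ) : Prop :=
  ∃ (n : ℕ) (i : X →ₗ[Λ] (Fin n → T)) (p : (Fin n → T) →ₗ[Λ] X),
    p ∘ₗ i = LinearMap.id

/-- `Y ∈ Fac T`: `Y` is a factor module of a module in `add T`. -/
def memFac (Λ : Type) [Ring Λ] (T Y : ModuleCat Λ) : Prop :=
  ∃ X : ModuleCat.{0} Λ, memAdd Λ T X ∧ ∃ p : X →ₗ[Λ] Y, Function.Surjective p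

/-- `T` is a tilting module: `pd T ≤ 1`, `Ext¹(T,T) = 0`, and there is an exact sequence
`0 → Λ → T₀ → T₁ → 0` with `T₀, T₁ ∈ add T`. -/
structure IsTilting (Λ : Type) [Ring Λ] (T : ModuleCat Λ) : Prop where
  pd : ∃ (n : ℕ) (p : (Fin n → Λ) →ₗ[Λ] T), Function.Surjective p ∧
    Projective (ModuleCat.of Λ ↥(LinearMap.ker p))
  ext_vanish : Limits.IsZero (ext1 Λ T T)
  cores : ∃ (T₀ T₁ : ModuleCat.{0} Λ), memAdd Λ T T₀ ∧ memAdd Λ T T₁ ∧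
    ∃ (f : Λ →ₗ[Λ] T₀) (g : T₀ →ₗ[Λ] T₁),
      Function.Injective f ∧ Function.Surjective g ∧ LinearMap.range f = LinearMap.ker g

section Stmt5Aux

open CategoryTheory.Limits ZeroObject

noncomputable section

namespace Stmt5Aux

universe u w uy uz

variable {Λ : Type} [Ring Λ]

lemma projective_of_isZero {M : ModuleCat.{u} Λ} (h : IsZero M) : Projective M :=
  ⟨fun {E X} _ e _ => ⟨0, h.eq_of_src _ _⟩⟩

variable {T F : ModuleCat.{u} Λ}

/-- The two-term complex `… → 0 → ker q → F`. -/
def resCx (q : F →ₗ[Λ] T) : ChainComplex (ModuleCat.{u} Λ) ℕ :=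
  ChainComplex.of
    (fun m => match m with
      | 0 => F
      | 1 => ModuleCat.of Λ ↥(LinearMap.ker q)
      | _ + 2 => 0)
    (fun m => match m with
      | 0 => ModuleCat.ofHom (LinearMap.ker q).subtype
      | _ + 1 => 0)
    (fun _ => zero_comp)

lemma resCx_d_1_0 (q : F →ₗ[Λ] T) :
    (resCx q).d 1 0 = ModuleCat.ofHom (LinearMap.ker q).subtype :=
  rfl

lemma resCx_d_2_1 (q : F →ₗ[Λ] T) : (resCx q).d 2 1 = 0 :=
  rfl

lemma resCx_isZero (q : F →ₗ[Λ] T) (m : ℕ) :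
    IsZero ((resCx q).X (m + 2)) :=
  isZero_zero _

lemma iota_comp_p (q : F →ₗ[Λ] T) :
    ModuleCat.ofHom (LinearMap.ker q).subtype ≫ ModuleCat.ofHom q = 0 := by
  ext x
  exact x.2

/-- The augmentation map of the resolution. -/
def resπ (q : F →ₗ[Λ] T) :
    resCx q ⟶ (ChainComplex.single₀ (ModuleCat.{u} Λ)).obj T :=
  (ChainComplex.toSingle₀Equiv _ _).symm ⟨ModuleCat.ofHom q, by
    rw [resCx_d_1_0]; exact iota_comp_p q⟩

lemma resπ_f_zero (q : F →ₗ[Λ] T) :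
    (resπ q).f 0 = ModuleCat.ofHom q :=
  ChainComplex.toSingle₀Equiv_symm_apply_f_zero _ _

/-- The resolution as a `ProjectiveResolution`. -/
def res (q : F →ₗ[Λ] T) (hq : Function.Surjective q) (hF : Projective F)
    (hproj : Projective (ModuleCat.of Λ ↥(LinearMap.ker q))) :
    ProjectiveResolution T where
  complex := resCx q
  projective m := by
    match m with
    | 0 => exact hF
    | 1 => exact hproj
    | (m + 2) => exact projective_of_isZero (resCx_isZero q m)
  π := resπ q
  quasiIso := ⟨fun m => by
    cases m with
    | zero =>
      rw [ChainComplex.quasiIsoAt₀_iff, ShortComplex.quasiIso_iff_of_zeros']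
      · refine (ShortComplex.exact_and_epi_g_iff_of_iso
          (S₂ := ShortComplex.mk (ModuleCat.ofHom (LinearMap.ker q).subtype)
            (ModuleCat.ofHom q) (iota_comp_p q)) ?_).2 ⟨?_, ?_⟩
        · refine ShortComplex.isoMk (Iso.refl _) (Iso.refl _) (Iso.refl _) ?_ ?_
          · show 𝟙 _ ≫ _ = (resCx q).d 1 0 ≫ 𝟙 _
            rw [resCx_d_1_0]
            exact (Category.id_comp _).trans (Category.comp_id _).symm
          · show 𝟙 _ ≫ _ = (resπ q).f 0 ≫ 𝟙 _
            rw [resπ_f_zero]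
            exact (Category.id_comp _).trans (Category.comp_id _).symm
        · rw [ShortComplex.moduleCat_exact_iff]
          rintro (x : F) (hx : q x = 0)
          exact ⟨⟨x, hx⟩, rfl⟩
        · exact (ModuleCat.epi_iff_surjective (ModuleCat.ofHom q)).2 hq
      all_goals rfl
    | succ m =>
      rw [quasiIsoAt_iff_exactAt']
      · cases m with
        | zero =>
          rw [HomologicalComplex.exactAt_iff' _ 2 1 0 (by simp) (by simp)]
          rw [ShortComplex.exact_iff_mono _ (resCx_d_2_1 q)]
          show Mono ((resCx q).d 1 0)
          rw [resCx_d_1_0]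
          exact (ModuleCat.mono_iff_injective _).2 Subtype.val_injective
        | succ m =>
          rw [HomologicalComplex.exactAt_iff' _ (m + 3) (m + 2) (m + 1) (by simp) (by simp)]
          exact ShortComplex.exact_of_isZero_X₂ _ (resCx_isZero q m)
      · apply ChainComplex.exactAt_succ_single_obj⟩

/-- Key consequence of `Ext¹(T,T) = 0`: maps from `ker q` to `T` extend to `F`. -/
theorem extend_into_T (q : F →ₗ[Λ] T) (hq : Function.Surjective q) (hF : Projective F)
    (hproj : Projective (ModuleCat.of Λ ↥(LinearMap.ker q)))
    (hvanish : IsZero (((Ext ℤ (ModuleCat.{u} Λ) 1).obj (Opposite.op T)).obj T))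
    (α : ↥(LinearMap.ker q) →ₗ[Λ] T) :
    ∃ β : F →ₗ[Λ] T, β ∘ₗ (LinearMap.ker q).subtype = α := by
  set R := res q hq hF hproj with hR
  have h1 : IsZero ((R.complex.linearYonedaObj ℤ T).homology 1) :=
    hvanish.of_iso (R.isoExt 1 T).symm
  have h2 : (R.complex.linearYonedaObj ℤ T).ExactAt 1 :=
    (HomologicalComplex.exactAt_iff_isZero_homology _ _).2 h1
  rw [HomologicalComplex.exactAt_iff' _ 0 1 2 (by simp) (by simp),
    ShortComplex.moduleCat_exact_iff] at h2
  obtain ⟨β, hβ⟩ := h2 (ModuleCat.ofHom α) (by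
    show (R.complex.linearYonedaObj ℤ T).d 1 2 (ModuleCat.ofHom α) = 0
    rw [ChainComplex.linearYonedaObj_d]
    show R.complex.d 2 1 ≫ ModuleCat.ofHom α = 0
    rw [show R.complex.d 2 1 = 0 from resCx_d_2_1 q]; exact Limits.zero_comp)
  refine ⟨ModuleCat.Hom.hom (β : R.complex.X 0 ⟶ T), ?_⟩
  have h3 : (R.complex.linearYonedaObj ℤ T).d 0 1 β = ModuleCat.ofHom α := hβ
  rw [ChainComplex.linearYonedaObj_d] at h3
  have h4 : R.complex.d 1 0 ≫ (β : R.complex.X 0 ⟶ T) = ModuleCat.ofHom α := h3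
  rw [show R.complex.d 1 0 = ModuleCat.ofHom (LinearMap.ker q).subtype
    from resCx_d_1_0 q] at h4
  exact congrArg ModuleCat.Hom.hom h4

/-- Maps from `ker q` into any quotient of a module in `add T` extend to `F`. -/
theorem extend_into_fac (q : F →ₗ[Λ] T)
    (key : ∀ α : ↥(LinearMap.ker q) →ₗ[Λ] T,
      ∃ β : F →ₗ[Λ] T, β ∘ₗ (LinearMap.ker q).subtype = α)
    (hP : Module.Projective Λ ↥(LinearMap.ker q))
    {W : Type w} [AddCommGroup W] [Module Λ W]
    (A : ModuleCat.{0} Λ) (hA : memAdd Λ T A)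
    (s : A →ₗ[Λ] W) (hs : Function.Surjective s)
    (α : ↥(LinearMap.ker q) →ₗ[Λ] W) :
    ∃ β : F →ₗ[Λ] W, β ∘ₗ (LinearMap.ker q).subtype = α := by
  obtain ⟨m, i, r, hri⟩ := hA
  obtain ⟨α₁, hα₁⟩ := Module.projective_lifting_property s α hs
  choose β₁ hβ₁ using fun j : Fin m =>
    key ((LinearMap.proj j) ∘ₗ (i ∘ₗ α₁))
  have hpi : (LinearMap.pi β₁) ∘ₗ (LinearMap.ker q).subtype = i ∘ₗ α₁ := by
    apply LinearMap.ext
    intro x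
    funext j
    exact DFunLike.congr_fun (hβ₁ j) x
  refine ⟨s ∘ₗ r ∘ₗ (LinearMap.pi β₁), ?_⟩
  apply LinearMap.ext
  intro x
  have h1 : (LinearMap.pi β₁) ((LinearMap.ker q).subtype x) = i (α₁ x) :=
    DFunLike.congr_fun hpi x
  have h2 : r (i (α₁ x)) = α₁ x := DFunLike.congr_fun hri (α₁ x)
  simp only [LinearMap.coe_comp, Function.comp_apply, h1, h2]
  exact DFunLike.congr_fun hα₁ x

/-- Lifting maps `T → Z` along a surjection `Y → Z` whose kernel admits the
extension property. -/
theorem lift_along {Y : Type uy} {Z : Type uz} [AddCommGroup Y] [Module Λ Y]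
    [AddCommGroup Z] [Module Λ Z] (g : Y →ₗ[Λ] Z) (hg : Function.Surjective g)
    (q : F →ₗ[Λ] T) (hq : Function.Surjective q)
    (hFproj : Module.Projective Λ F)
    (ext_ker : ∀ α : ↥(LinearMap.ker q) →ₗ[Λ] ↥(LinearMap.ker g),
      ∃ β : F →ₗ[Λ] ↥(LinearMap.ker g), β ∘ₗ (LinearMap.ker q).subtype = α)
    (φ : T →ₗ[Λ] Z) : ∃ h : T →ₗ[Λ] Y, g ∘ₗ h = φ := by
  obtain ⟨u, hu⟩ := Module.projective_lifting_property g (φ ∘ₗ q) hg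
  have hmem : ∀ x : ↥(LinearMap.ker q), g (u x.1) = 0 := by
    intro x
    have : g (u x.1) = φ (q x.1) := DFunLike.congr_fun hu x.1
    rw [this, x.2, map_zero]
  obtain ⟨β, hβ⟩ := ext_ker
    (LinearMap.codRestrict (LinearMap.ker g) (u ∘ₗ (LinearMap.ker q).subtype)
      (fun x => by simpa [LinearMap.mem_ker] using hmem x))
  set v : F →ₗ[Λ] Y := u - (LinearMap.ker g).subtype ∘ₗ β with hv
  have hker : LinearMap.ker q ≤ LinearMap.ker v := by
    intro x hx
    have h1 : β x = LinearMap.codRestrict (LinearMap.ker g)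
        (u ∘ₗ (LinearMap.ker q).subtype)
        (fun x => by simpa [LinearMap.mem_ker] using hmem x) ⟨x, hx⟩ :=
      DFunLike.congr_fun hβ ⟨x, hx⟩
    have h2 : ((β x : ↥(LinearMap.ker g)) : Y) = u x := by
      rw [h1]; rfl
    simp [LinearMap.mem_ker, hv, h2]
  have hgv : ∀ x : F, g (v x) = φ (q x) := by
    intro x
    have h1 : g ((β x : ↥(LinearMap.ker g)) : Y) = 0 := (β x).2
    have h2 : g (u x) = φ (q x) := DFunLike.congr_fun hu x
    simp [hv, h1, h2]
  set e := LinearMap.quotKerEquivOfSurjective q hq with he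
  refine ⟨(LinearMap.ker q).liftQ v hker ∘ₗ e.symm.toLinearMap, ?_⟩
  apply LinearMap.ext
  intro t
  obtain ⟨x, rfl⟩ := hq t
  have hsymm : e.symm (q x) = Submodule.Quotient.mk x := by
    rw [LinearEquiv.symm_apply_eq]
    simp [he, LinearMap.quotKerEquivOfSurjective, LinearMap.quotKerEquivRange]
  simp only [LinearMap.coe_comp, Function.comp_apply, LinearEquiv.coe_coe, hsymm]
  rw [Submodule.liftQ_apply]
  exact hgv x

/-- `add T` is closed under binary products. -/
lemma memAdd_prod {T : ModuleCat.{u} Λ} {A B : ModuleCat.{0} Λ}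
    (hA : memAdd Λ T A) (hB : memAdd Λ T B) :
    memAdd Λ T (ModuleCat.of Λ (↥A × ↥B)) := by
  obtain ⟨na, iA, rA, hA⟩ := hA
  obtain ⟨nb, iB, rB, hB⟩ := hB
  let e : ((Fin na → T) × (Fin nb → T)) ≃ₗ[Λ] (Fin (na + nb) → T) :=
    (LinearEquiv.sumArrowLequivProdArrow _ _ Λ T).symm.trans
      (LinearEquiv.funCongrLeft Λ T finSumFinEquiv.symm)
  refine ⟨na + nb, e.toLinearMap ∘ₗ (iA.prodMap iB),
    (rA.prodMap rB) ∘ₗ e.symm.toLinearMap, ?_⟩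
  apply LinearMap.ext
  rintro ⟨a, b⟩
  simp only [LinearMap.coe_comp, Function.comp_apply, LinearEquiv.coe_coe,
    LinearMap.prodMap_apply, LinearEquiv.symm_apply_apply, LinearMap.id_coe, id_eq]
  exact Prod.ext (DFunLike.congr_fun hA a) (DFunLike.congr_fun hB b)

end Stmt5Aux

end

end Stmt5Aux

open Stmt5Aux in
/-- Let `Λ` be a finite dimensional algebra and `T` a tilting module.  Then `Fac T` is closed
under extensions: if `0 → X → Y → Z → 0` is exact with `X, Z ∈ Fac T`, then `Y ∈ Fac T`. -/
theorem stmt5 (k : Type) [Field k] (Λ : Type) [Ring Λ] [Algebra k Λ]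
    [FiniteDimensional k Λ]
    (T : ModuleCat Λ) [Module.Finite Λ T] (hT : IsTilting Λ T)
    (X Y Z : ModuleCat Λ) [Module.Finite Λ X] [Module.Finite Λ Y] [Module.Finite Λ Z]
    (f : X →ₗ[Λ] Y) (g : Y →ₗ[Λ] Z)
    (hf : Function.Injective f) (hg : Function.Surjective g)
    (hexact : LinearMap.range f = LinearMap.ker g)
    (hX : memFac Λ T X) (hZ : memFac Λ T Z) :
    memFac Λ T Y := by
  obtain ⟨A, hAadd, qA, hqA⟩ := hX
  obtain ⟨B, hBadd, qB, hqB⟩ := hZ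
  obtain ⟨n, p, hp, hproj⟩ := hT.pd
  -- set up the ULifted free cover of `T`
  let e' : ULift.{0} (Fin n → Λ) ≃ₗ[Λ] (Fin n → Λ) := ULift.moduleEquiv
  let F : ModuleCat.{0} Λ := ModuleCat.of Λ (ULift.{0} (Fin n → Λ))
  let q : F →ₗ[Λ] T := p ∘ₗ e'.toLinearMap
  have hq : Function.Surjective q := hp.comp e'.surjective
  have hFprojMod : Module.Projective Λ F :=
    Module.Projective.of_equiv e'.symm
  have hFproj : Projective F := (IsProjective.iff_projective _).1 hFprojMod
  -- the kernel of `q` is equivalent to the kernel of `p`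
  have hkermap : (LinearMap.ker q).map (e' : ULift.{0} (Fin n → Λ) →ₗ[Λ] (Fin n → Λ))
      = LinearMap.ker p := by
    ext x
    constructor
    · rintro ⟨y, hy, rfl⟩
      exact hy
    · intro hx
      refine ⟨e'.symm x, ?_, e'.apply_symm_apply x⟩
      show q (e'.symm x) = 0
      show p (e' (e'.symm x)) = 0
      rw [e'.apply_symm_apply]
      exact hx
  let eK : ↥(LinearMap.ker q) ≃ₗ[Λ] ↥(LinearMap.ker p) :=
    LinearEquiv.ofSubmodules e' _ _ hkermap
  have hPpMod : Module.Projective Λ ↥(LinearMap.ker p) :=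
    (IsProjective.iff_projective _).2 hproj
  have hPqMod : Module.Projective Λ ↥(LinearMap.ker q) :=
    Module.Projective.of_equiv eK.symm
  have hPqproj : Projective (ModuleCat.of Λ ↥(LinearMap.ker q)) :=
    (IsProjective.iff_projective _).1 hPqMod
  -- the key extension property into `T`
  have key : ∀ α : ↥(LinearMap.ker q) →ₗ[Λ] T,
      ∃ β : F →ₗ[Λ] T, β ∘ₗ (LinearMap.ker q).subtype = α :=
    extend_into_T q hq hFproj hPqproj hT.ext_vanish
  -- surjection from `A` onto `ker g`
  have hmemker : ∀ a : A, f (qA a) ∈ LinearMap.ker g := by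
    intro a
    rw [← hexact]
    exact ⟨qA a, rfl⟩
  let qK : A →ₗ[Λ] ↥(LinearMap.ker g) :=
    LinearMap.codRestrict (LinearMap.ker g) (f ∘ₗ qA) hmemker
  have hqK : Function.Surjective qK := by
    rintro ⟨y, hy⟩
    rw [← hexact] at hy
    obtain ⟨x, hx⟩ := hy
    obtain ⟨a, rfl⟩ := hqA x
    exact ⟨a, Subtype.ext hx⟩
  -- extension property into `ker g`
  have ext_ker : ∀ α : ↥(LinearMap.ker q) →ₗ[Λ] ↥(LinearMap.ker g),
      ∃ β : F →ₗ[Λ] ↥(LinearMap.ker g), β ∘ₗ (LinearMap.ker q).subtype = α :=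
    fun α => extend_into_fac q key hPqMod A hAadd qK hqK α
  -- lifting property for maps `T → Z` along `g`
  have liftT : ∀ φ : T →ₗ[Λ] Z, ∃ h : T →ₗ[Λ] Y, g ∘ₗ h = φ :=
    lift_along g hg q hq hFprojMod ext_ker
  -- lift `qB : B → Z` along `g`
  obtain ⟨m, iB, rB, hrB⟩ := hBadd
  choose h hh using fun j : Fin m =>
    liftT ((qB ∘ₗ rB) ∘ₗ LinearMap.single Λ (fun _ : Fin m => ↥T) j)
  let H : (Fin m → T) →ₗ[Λ] Y := ∑ j, (h j) ∘ₗ LinearMap.proj j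
  have hgH : ∀ t : Fin m → T, g (H t) = qB (rB t) := by
    intro t
    have h1 : g (H t) = ∑ j, g ((h j) (t j)) := by
      simp [H, map_sum]
    have h2 : ∀ j, g ((h j) (t j)) = qB (rB (Pi.single j (t j))) := by
      intro j
      exact DFunLike.congr_fun (hh j) (t j)
    rw [h1]
    simp_rw [h2]
    rw [← map_sum, ← map_sum, Finset.univ_sum_single]
  let HB : B →ₗ[Λ] Y := H ∘ₗ iB
  have hgHB : ∀ b : B, g (HB b) = qB b := by
    intro b
    have : rB (iB b) = b := DFunLike.congr_fun hrB b
    simp only [HB, LinearMap.coe_comp, Function.comp_apply, hgH, this]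
  -- assemble the surjection from `A × B` onto `Y`
  refine ⟨ModuleCat.of Λ (↥A × ↥B), memAdd_prod hAadd ⟨m, iB, rB, hrB⟩, 
    (f ∘ₗ qA).coprod HB, ?_⟩
  intro y
  obtain ⟨b, hb⟩ := hqB (g y)
  have hker : y - HB b ∈ LinearMap.ker g := by
    rw [LinearMap.mem_ker, map_sub, hgHB, hb, sub_self]
  rw [← hexact] at hker
  obtain ⟨x, hx⟩ := hker
  obtain ⟨a, rfl⟩ := hqA x
  refine ⟨(a, b), ?_⟩
  show f (qA a) + HB b = y
  rw [hx]
  exact sub_add_cancel y (HB b)
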